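/- arXiv:1403.3810 — 10 statements merged into one kernel-verified Lean document; each statement's English description precedes it below -/
import Mathlib

section
/- Let h be a natural number such that the basis is admissible for h, i.e. X(h) ≥ a_3. Write X(h) = (k+1)*a_3 + Y with k an integer and 0 ≤ Y < a_3. Then k ≥ 0, Y < a_3 − 1, h > k, and there exists p ≤ k such that SG(A, h−k, p) is a stride generator, y = Y + 1 is a break of SG(A, h−k, p), and y is either a canonical break or has break order > k + 1. -/
/-- `x` has an `n`-generation of order `i` (w.r.t. the basis `{1, a2, a3}`). -/
def HasGen (a2 a3 : ℤ) (n i : ℕ) (x : ℤ) : Prop :=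
  ∃ c1 c2 : ℕ, x + (i : ℤ) * a3 = (c2 : ℤ) * a2 + (c1 : ℤ) ∧ c1 + c2 ≤ n + i

/-- `SG(A, n, p)` is a stride generator. -/
def IsSG (a2 a3 : ℤ) (n p : ℕ) : Prop :=
  (∀ x : ℤ, 0 ≤ x → x < a3 → ∃ i : ℕ, i ≤ p ∧ HasGen a2 a3 n i x) ∧
  (∃ x : ℤ, 0 ≤ x ∧ x < a3 ∧ ∀ i : ℕ, i < p → ¬ HasGen a2 a3 n i x) ∧
  (∃ y : ℤ, 0 ≤ y ∧ y < a3 ∧ ∀ i : ℕ, i ≤ p + 1 → ¬ HasGen a2 a3 (n - 1) i y)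

/-- `y` is a break of the stride generator `SG(A, n, p)`. -/
def IsBreak (a2 a3 : ℤ) (n p : ℕ) (y : ℤ) : Prop :=
  0 ≤ y ∧ y < a3 ∧ ∀ i : ℕ, i ≤ p + 1 → ¬ HasGen a2 a3 (n - 1) i y

/-- `y` is a canonical break: it has no `(n-1)`-generation of any order. -/
def IsCanonicalBreak (a2 a3 : ℤ) (n : ℕ) (y : ℤ) : Prop :=
  ∀ i : ℕ, ¬ HasGen a2 a3 (n - 1) i y

/-- `y` has break order `q`: `q` is the smallest order of an `(n-1)`-generation of `y`. -/
def HasBreakOrder (a2 a3 : ℤ) (n : ℕ) (y : ℤ) (q : ℕ) : Prop :=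
  HasGen a2 a3 (n - 1) q y ∧ ∀ i : ℕ, i < q → ¬ HasGen a2 a3 (n - 1) i y

/-- A canonical stride generator: all of its breaks are canonical. -/
def IsCanonicalSG (a2 a3 : ℤ) (n p : ℕ) : Prop :=
  IsSG a2 a3 n p ∧ ∀ y : ℤ, IsBreak a2 a3 n p y → IsCanonicalBreak a2 a3 n y

/-- A fundamental stride generator: no stride generator for `A` has larger `n`. -/
def IsFundamentalSG (a2 a3 : ℤ) (n p : ℕ) : Prop :=
  IsSG a2 a3 n p ∧ ∀ n' p' : ℕ, IsSG a2 a3 n' p' → n' ≤ n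

/-- Start of the thread `T(e, i)`. -/
def thrStr (a2 a3 : ℤ) (e i : ℕ) : ℤ := (e : ℤ) * a2 - (i : ℤ) * a3

/-- End of the thread `T(e, i)` (for parameter `n`). -/
def thrEnd (a2 a3 : ℤ) (n e i : ℕ) : ℤ := thrStr a2 a3 e i + ((n : ℤ) + (i : ℤ)) - (e : ℤ)

/-- The value `x` is covered by the thread `T(e, i)`. -/
def ThrCoversVal (a2 a3 : ℤ) (n e i : ℕ) (x : ℤ) : Prop :=
  thrStr a2 a3 e i ≤ x ∧ x ≤ thrEnd a2 a3 n e i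

/-- The thread `T(e1, i1)` covers the thread `T(e2, i2)`. -/
def ThrCoversThr (a2 a3 : ℤ) (n e1 i1 e2 i2 : ℕ) : Prop :=
  thrStr a2 a3 e1 i1 ≤ thrStr a2 a3 e2 i2 ∧ thrEnd a2 a3 n e2 i2 ≤ thrEnd a2 a3 n e1 i1

/-- The thread `T(e, i)` has positive length and appears in the diagram:
it covers at least one value in `[0, a3)`. -/
def ThrAppears (a2 a3 : ℤ) (n e i : ℕ) : Prop :=
  e ≤ n + i ∧ ∃ x : ℤ, 0 ≤ x ∧ x < a3 ∧ ThrCoversVal a2 a3 n e i x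

/-- `x` has an `h`-representation with respect to the basis `{1, a2, a3}`. -/
def HasRep (a2 a3 : ℤ) (h : ℕ) (x : ℤ) : Prop :=
  ∃ c1 c2 c3 : ℕ, x = (c3 : ℤ) * a3 + (c2 : ℤ) * a2 + (c1 : ℤ) ∧ c1 + c2 + c3 ≤ h

/-- `X` is the `h`-range: every `0 ≤ x ≤ X` has an `h`-representation and `X + 1` does not. -/
def IsHRange (a2 a3 : ℤ) (h : ℕ) (X : ℤ) : Prop :=
  0 ≤ X ∧ (∀ x : ℤ, 0 ≤ x → x ≤ X → HasRep a2 a3 h x) ∧ ¬ HasRep a2 a3 h (X + 1)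


lemma rep_to_gen (a2 a3 : ℤ) (ha2 : 1 < a2) (ha3 : a2 < a3)
    (h j : ℕ) (hj : j ≤ h) (x : ℤ) (hx0 : 0 ≤ x) (hx1 : x < a3)
    (hrep : HasRep a2 a3 h ((j : ℤ) * a3 + x)) :
    ∃ i : ℕ, i ≤ j ∧ HasGen a2 a3 (h - j) i x := by
  obtain ⟨c1, c2, c3, heq, hle⟩ := hrep
  have hc1 : (0:ℤ) ≤ (c1:ℤ) := Int.natCast_nonneg c1
  have hc2 : (0:ℤ) ≤ (c2:ℤ) := Int.natCast_nonneg c2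
  have hc3 : c3 ≤ j := by
    by_contra hc
    push_neg at hc
    have h1 : (j:ℤ) + 1 ≤ (c3:ℤ) := by exact_mod_cast hc
    have h2 : (0:ℤ) ≤ (c2:ℤ) * a2 := by positivity
    nlinarith [mul_le_mul_of_nonneg_right h1 (show (0:ℤ) ≤ a3 by linarith)]
  refine ⟨j - c3, by omega, c1, c2, ?_, by omega⟩
  have : ((j - c3 : ℕ) : ℤ) = (j : ℤ) - (c3 : ℤ) := by
    exact Nat.cast_sub hc3
  rw [this]; linarith

lemma gen_to_rep (a2 a3 : ℤ) (h j i : ℕ) (hj : j ≤ h) (hi : i ≤ j) (x : ℤ)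
    (hgen : HasGen a2 a3 (h - j) i x) : HasRep a2 a3 h ((j : ℤ) * a3 + x) := by
  obtain ⟨c1, c2, heq, hle⟩ := hgen
  refine ⟨c1, c2, j - i, ?_, by omega⟩
  have : ((j - i : ℕ) : ℤ) = (j : ℤ) - (i : ℤ) := Nat.cast_sub hi
  rw [this]; linarith

/-- Lemma 11: every admissible `h`-basis has an underlying stride generator. -/
theorem stmt1 (a2 a3 : ℤ) (ha2 : 1 < a2) (ha3 : a2 < a3)
    (h : ℕ) (X : ℤ) (hX : IsHRange a2 a3 h X) (hadm : a3 ≤ X)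
    (k Y : ℤ) (hkY : X = (k + 1) * a3 + Y) (hY0 : 0 ≤ Y) (hY1 : Y < a3) :
    0 ≤ k ∧ Y < a3 - 1 ∧ k < (h : ℤ) ∧
    ∃ p : ℕ, (p : ℤ) ≤ k ∧ IsSG a2 a3 (h - k.toNat) p ∧
      IsBreak a2 a3 (h - k.toNat) p (Y + 1) ∧
      (IsCanonicalBreak a2 a3 (h - k.toNat) (Y + 1) ∨
        ∃ q : ℕ, k + 1 < (q : ℤ) ∧ HasBreakOrder a2 a3 (h - k.toNat) (Y + 1) q) := by
  classical
  obtain ⟨hX0, hall, hnot⟩ := hX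
  have ha3pos : (0:ℤ) < a3 := by linarith
  -- k ≥ 0
  have hk0 : 0 ≤ k := by nlinarith
  -- X ≤ h * a3
  have hXh : X ≤ (h:ℤ) * a3 := by
    obtain ⟨c1, c2, c3, heq, hle⟩ := hall X hX0 le_rfl
    have h1 : (c1:ℤ) + c2 + c3 ≤ (h:ℤ) := by exact_mod_cast hle
    have hc1 : (0:ℤ) ≤ (c1:ℤ) := Int.natCast_nonneg c1
    have hc2 : (0:ℤ) ≤ (c2:ℤ) := Int.natCast_nonneg c2
    have hc3 : (0:ℤ) ≤ (c3:ℤ) := Int.natCast_nonneg c3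
    nlinarith
  -- k < h
  have hkh : k < (h:ℤ) := by nlinarith
  -- Y < a3 - 1
  have hY : Y < a3 - 1 := by
    by_contra hYc
    push_neg at hYc
    have hYeq : Y = a3 - 1 := by linarith
    have hk2 : k + 2 ≤ (h:ℤ) := by nlinarith
    apply hnot
    refine ⟨0, 0, (k+2).toNat, ?_, ?_⟩
    · have : ((k+2).toNat : ℤ) = k + 2 := Int.toNat_of_nonneg (by linarith)
      rw [this]; push_cast; linarith
    · have : ((k+2).toNat : ℤ) ≤ (h:ℤ) := by
        rw [Int.toNat_of_nonneg (by linarith)]; exact hk2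
      omega
  set K := k.toNat with hKdef
  have hKk : (K:ℤ) = k := Int.toNat_of_nonneg hk0
  have hKh : K + 1 ≤ h := by omega
  -- every 0 ≤ x < a3 has an (h-K)-generation of order ≤ K
  have hA : ∀ x : ℤ, 0 ≤ x → x < a3 → ∃ i : ℕ, i ≤ K ∧ HasGen a2 a3 (h - K) i x := by
    intro x hx0 hx1
    apply rep_to_gen a2 a3 ha2 ha3 h K (by omega) x hx0 hx1
    apply hall _ (by positivity)
    rw [hKk]; nlinarith
  -- no (h-K-1)-generation of order ≤ K+1 for Y+1
  have hC : ∀ i : ℕ, i ≤ K + 1 → ¬ HasGen a2 a3 (h - K - 1) i (Y + 1) := by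
    intro i hi hg
    apply hnot
    have h1 : ((K+1:ℕ):ℤ) * a3 + (Y+1) = X + 1 := by push_cast; rw [hKk]; linarith
    rw [← h1]
    apply gen_to_rep a2 a3 h (K+1) i hKh hi
    rwa [show h - (K+1) = h - K - 1 by omega]
  have hex : ∃ p : ℕ, ∀ x : ℤ, 0 ≤ x → x < a3 → ∃ i : ℕ, i ≤ p ∧ HasGen a2 a3 (h - K) i x :=
    ⟨K, hA⟩
  set p := Nat.find hex with hpdef
  have hpK : p ≤ K := Nat.find_le hA
  have hpspec := Nat.find_spec hex
  have hbreak : IsBreak a2 a3 (h - K) p (Y + 1) := by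
    refine ⟨by linarith, by linarith, fun i hi => ?_⟩
    exact hC i (by omega)
  refine ⟨hk0, hY, hkh, p, by rw [← hKk]; exact_mod_cast hpK, ⟨hpspec, ?_, ?_⟩, hbreak, ?_⟩
  · -- condition B
    rcases Nat.eq_zero_or_pos p with hp0 | hp0
    · exact ⟨0, le_rfl, by linarith, fun i hi => by omega⟩
    · have hmin := Nat.find_min hex (show p - 1 < p by omega)
      push_neg at hmin
      obtain ⟨x, hx0, hx1, hxg⟩ := hmin
      refine ⟨x, hx0, hx1, fun i hi hg => ?_⟩
      exact hxg i (by omega) hg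
  · -- condition C
    exact ⟨Y + 1, by linarith, by linarith, fun i hi => hC i (by omega)⟩
  · -- canonical or high break order
    by_cases hgen : ∃ i : ℕ, HasGen a2 a3 (h - K - 1) i (Y + 1)
    · right
      refine ⟨Nat.find hgen, ?_, Nat.find_spec hgen, fun i hi => Nat.find_min hgen hi⟩
      have hq : K + 1 < Nat.find hgen := by
        by_contra hq
        push_neg at hq
        exact hC _ hq (Nat.find_spec hgen)
      rw [← hKk]; exact_mod_cast hq
    · left
      intro i hg
      exact hgen ⟨i, hg⟩
end

section
/- If SG(A, n, p) is a stride generator and y is a break of it, then y ≥ a_3 − a_2. -/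
/-- Lemma 1: any break `y` of a stride generator satisfies `y ≥ a3 - a2`. -/
theorem stmt6 (a2 a3 : ℤ) (ha2 : 1 < a2) (ha3 : a2 < a3)
    (n p : ℕ) (hsg : IsSG a2 a3 n p)
    (y : ℤ) (hbr : IsBreak a2 a3 n p y) :
    a3 - a2 ≤ y := by
  obtain ⟨hy0, hya, hbreak⟩ := hbr
  by_contra hlt
  push_neg at hlt
  obtain ⟨hA, -, -⟩ := hsg
  obtain ⟨i, hip, c1, c2, heq, hle⟩ := hA (y + a2) (by linarith) (by linarith)
  apply hbreak i (by omega)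
  have ht : (0:ℤ) ≤ (i : ℤ) * a3 := mul_nonneg (Int.natCast_nonneg i) (by linarith)
  set t := (i : ℤ) * a3 with htdef
  rcases Nat.eq_zero_or_pos c2 with hc2 | hc2
  · subst hc2
    refine ⟨((c1 : ℤ) - a2).toNat, 0, ?_, ?_⟩
    · push_cast at heq ⊢
      omega
    · push_cast at heq
      omega
  · refine ⟨c1, c2 - 1, ?_, by omega⟩
    push_cast [Nat.cast_sub hc2]
    linarith
end

section
/- If SG(A, n, p) is a stride generator, then there exists an integer x with a_3 − a_2 ≤ x < a_3 such that x has an n-generation of order p but no n-generation of order < p. -/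

lemma shiftGen (a2 a3 : ℤ) (ha2 : 1 < a2) (ha3 : 0 < a3) (n i : ℕ) (x : ℤ) (hx : 0 ≤ x)
    (h : HasGen a2 a3 n i (x + a2)) : HasGen a2 a3 n i x := by
  obtain ⟨c1, c2, heq, hle⟩ := h
  have hnn : (0:ℤ) ≤ x + (i:ℤ) * a3 :=
    add_nonneg hx (mul_nonneg (Int.natCast_nonneg i) ha3.le)
  cases c2 with
  | zero =>
      simp only [Nat.cast_zero, zero_mul, zero_add] at heq
      have h1 : x + (i:ℤ) * a3 = (c1:ℤ) - a2 := by linarith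
      refine ⟨(x + (i:ℤ) * a3).toNat, 0, ?_, ?_⟩
      · push_cast
        rw [Int.toNat_of_nonneg hnn]; ring
      · have h2 : ((x + (i:ℤ) * a3).toNat : ℤ) = (c1:ℤ) - a2 := by
          rw [Int.toNat_of_nonneg hnn]; exact h1
        omega
  | succ c2' =>
      refine ⟨c1, c2', ?_, by omega⟩
      push_cast at heq
      linarith [heq, (by ring : ((c2':ℤ) + 1) * a2 = (c2':ℤ) * a2 + a2)]

lemma climb (a2 a3 : ℤ) (ha2 : 1 < a2) (ha3 : a2 < a3) (n p : ℕ) :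
    ∀ k : ℕ, ∀ x : ℤ, 0 ≤ x → x < a3 → (a3 - x).toNat ≤ k →
      (∀ i, i < p → ¬ HasGen a2 a3 n i x) →
      ∃ x', a3 - a2 ≤ x' ∧ x' < a3 ∧ ∀ i, i < p → ¬ HasGen a2 a3 n i x' := by
  intro k
  induction k with
  | zero => intro x hx0 hx3 hk _; omega
  | succ k ih =>
      intro x hx0 hx3 hk hno
      by_cases hc : a3 - a2 ≤ x
      · exact ⟨x, hc, hx3, hno⟩
      · push_neg at hc
        have h3 : (0:ℤ) < a3 := by linarith
        have hno' : ∀ i, i < p → ¬ HasGen a2 a3 n i (x + a2) := by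
          intro i hi hg
          exact hno i hi (shiftGen a2 a3 ha2 h3 n i x hx0 hg)
        exact ih (x + a2) (by linarith) (by linarith) (by omega) hno'

/-- Lemma 2: some `x ≥ a3 - a2` satisfies condition (B): it has an `n`-generation of order `p`
but none of smaller order. -/
theorem stmt7 (a2 a3 : ℤ) (ha2 : 1 < a2) (ha3 : a2 < a3)
    (n p : ℕ) (hsg : IsSG a2 a3 n p) :
    ∃ x : ℤ, a3 - a2 ≤ x ∧ x < a3 ∧ HasGen a2 a3 n p x ∧
      ∀ i : ℕ, i < p → ¬ HasGen a2 a3 n i x := by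
  obtain ⟨hA, ⟨x0, hx00, hx03, hx0B⟩, -⟩ := hsg
  obtain ⟨x, hx1, hx2, hx3⟩ :=
    climb a2 a3 ha2 ha3 n p (a3 - x0).toNat x0 hx00 hx03 le_rfl hx0B
  obtain ⟨i, hip, hgen⟩ := hA x (by linarith) hx2
  have : i = p := by
    rcases lt_or_eq_of_le hip with h | h
    · exact absurd hgen (hx3 i h)
    · exact h
  exact ⟨x, hx1, hx2, this ▸ hgen, hx3⟩
end

section
/- If SG(A, n, p) is a stride generator, then for every i with 0 ≤ i ≤ p there exists a natural number e with e ≤ n + i (so the thread T(e, i) has positive length) such that a_3 − a_2 ≤ e*a_2 − i*a_3 < a_3; that is, every order i ≤ p is realized by a thread whose start lies in [a_3 − a_2, a_3). -/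
/-- Key bound: `(p+1)·a3 ≤ (n+p+1)·a2` for any stride generator. -/
lemma sg_key_bound (a2 a3 : ℤ) (ha2 : 1 < a2) (ha3 : a2 < a3)
    (n p : ℕ) (hsg : IsSG a2 a3 n p) :
    ((p : ℤ) + 1) * a3 ≤ ((n : ℤ) + (p : ℤ) + 1) * a2 := by
  obtain ⟨hA, ⟨x0, hx0, hx0lt, hx0no⟩, -⟩ := hsg
  have ha2pos : (0 : ℤ) < a2 := by linarith
  set k : ℤ := (a3 - 1 - x0) / a2 with hk
  have hknn : 0 ≤ k := Int.ediv_nonneg (by linarith) (le_of_lt ha2pos)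
  have hdm := Int.mul_ediv_add_emod (a3 - 1 - x0) a2
  have hmn := Int.emod_nonneg (a3 - 1 - x0) (ne_of_gt ha2pos)
  have hml := Int.emod_lt_of_pos (a3 - 1 - x0) ha2pos
  set x1 : ℤ := x0 + k * a2 with hx1def
  have hx1nn : 0 ≤ x1 := by nlinarith
  have hx1lt : x1 < a3 := by nlinarith
  have hx1ge : a3 - a2 ≤ x1 := by nlinarith
  -- x1 still has no n-generation of order < p
  have hx1no : ∀ j : ℕ, j < p → ¬ HasGen a2 a3 n j x1 := by
    intro j hj hgen
    apply hx0no j hj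
    obtain ⟨c1, c2, heq, hle⟩ := hgen
    by_cases hc : k.toNat ≤ c2
    · refine ⟨c1, c2 - k.toNat, ?_, by omega⟩
      have hcast : ((c2 - k.toNat : ℕ) : ℤ) = (c2 : ℤ) - k := by
        rw [Nat.cast_sub hc, Int.toNat_of_nonneg hknn]
      rw [hcast]
      have : x1 + (j : ℤ) * a3 = (c2 : ℤ) * a2 + c1 := heq
      rw [hx1def] at this
      linarith [this]
    · -- c2 < k ; then x0 + j*a3 ≤ c1, use a pure-unit representation
      push_neg at hc
      have hc' : (c2 : ℤ) < k := by omega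
      have hxj : (0 : ℤ) ≤ x0 + (j : ℤ) * a3 := by
        have h3 : (0 : ℤ) ≤ (j : ℤ) * a3 :=
          mul_nonneg (Int.natCast_nonneg j) (by linarith)
        linarith
      have hle1 : x0 + (j : ℤ) * a3 ≤ (c1 : ℤ) := by
        have : x1 + (j : ℤ) * a3 = (c2 : ℤ) * a2 + c1 := heq
        rw [hx1def] at this
        nlinarith [this]
      refine ⟨(x0 + (j : ℤ) * a3).toNat, 0, ?_, ?_⟩
      · simp [Int.toNat_of_nonneg hxj]
      · have h1 : (x0 + (j : ℤ) * a3).toNat ≤ c1 := Int.toNat_le.mpr hle1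
        omega
  -- by (A), x1 has a generation of order exactly p
  obtain ⟨j, hjp, hgenj⟩ := hA x1 hx1nn hx1lt
  have hjeq : j = p := by
    rcases lt_or_eq_of_le hjp with h | h
    · exact absurd hgenj (hx1no j h)
    · exact h
  subst hjeq
  obtain ⟨c1, c2, heq, hle⟩ := hgenj
  have hleZ : (c1 : ℤ) + (c2 : ℤ) ≤ (n : ℤ) + (j : ℤ) := by exact_mod_cast hle
  have hc1nn : (0 : ℤ) ≤ (c1 : ℤ) := Int.natCast_nonneg c1
  have hc2nn : (0 : ℤ) ≤ (c2 : ℤ) := Int.natCast_nonneg c2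
  nlinarith [heq, hx1ge, hleZ, hc1nn, hc2nn]

/-- Lemma 3: all threads of order `i ≤ p` exist; each such order is realized by a thread
whose start lies in `[a3 - a2, a3)`. -/
theorem stmt8 (a2 a3 : ℤ) (ha2 : 1 < a2) (ha3 : a2 < a3)
    (n p : ℕ) (hsg : IsSG a2 a3 n p) :
    ∀ i : ℕ, i ≤ p → ∃ e : ℕ, e ≤ n + i ∧
      a3 - a2 ≤ (e : ℤ) * a2 - (i : ℤ) * a3 ∧ (e : ℤ) * a2 - (i : ℤ) * a3 < a3 := by
  intro i hi
  have ha2pos : (0 : ℤ) < a2 := by linarith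
  have key := sg_key_bound a2 a3 ha2 ha3 n p hsg
  -- descend the bound to order i
  have hd : (0 : ℤ) ≤ (p : ℤ) - (i : ℤ) := by
    have : (i : ℤ) ≤ (p : ℤ) := by exact_mod_cast hi
    linarith
  have keyi : ((i : ℤ) + 1) * a3 ≤ ((n : ℤ) + (i : ℤ) + 1) * a2 := by
    nlinarith [key, mul_nonneg hd (by linarith : (0:ℤ) ≤ a3 - a2)]
  set M : ℤ := ((i : ℤ) + 1) * a3 with hM
  have hMpos : (1 : ℤ) ≤ M := by nlinarith [Int.natCast_nonneg i]
  set q : ℤ := (M - 1) / a2 with hq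
  have hqnn : 0 ≤ q := Int.ediv_nonneg (by linarith) (le_of_lt ha2pos)
  have hdm := Int.mul_ediv_add_emod (M - 1) a2
  have hmn := Int.emod_nonneg (M - 1) (ne_of_gt ha2pos)
  have hml := Int.emod_lt_of_pos (M - 1) ha2pos
  have hub : q * a2 ≤ M - 1 := by nlinarith
  have hlb : M - a2 ≤ q * a2 := by nlinarith
  refine ⟨q.toNat, ?_, ?_, ?_⟩
  · have hqa : q * a2 < ((n : ℤ) + (i : ℤ) + 1) * a2 := by linarith
    have hqlt : q < (n : ℤ) + (i : ℤ) + 1 := lt_of_mul_lt_mul_right hqa (le_of_lt ha2pos)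
    have h2 : (q.toNat : ℤ) < ((n + i + 1 : ℕ) : ℤ) := by
      rw [Int.toNat_of_nonneg hqnn]; push_cast; linarith
    have h3 : q.toNat < n + i + 1 := by exact_mod_cast h2
    omega
  · rw [Int.toNat_of_nonneg hqnn]; linarith [hM, hlb]
  · rw [Int.toNat_of_nonneg hqnn]; linarith [hM, hub]
end

section
/- In a stride generator SG(A, n, p), no thread of order ≤ p appearing in the diagram is covered by any distinct thread appearing in the diagram. -/
/-- Lemma 6: no thread of order `≤ p` appearing in the diagram is covered by any other
(distinct) thread appearing in the diagram. -/
theorem stmt10 (a2 a3 : ℤ) (ha2 : 1 < a2) (ha3 : a2 < a3)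
    (n p : ℕ) (hsg : IsSG a2 a3 n p) :
    ∀ e i e' i' : ℕ, i ≤ p → ThrAppears a2 a3 n e i → ThrAppears a2 a3 n e' i' →
      (e', i') ≠ (e, i) → ¬ ThrCoversThr a2 a3 n e' i' e i := by
  rintro e i e' i' hip hT hT' hne ⟨hs, hd⟩
  obtain ⟨hA, ⟨x0, hx0, hx3, hno⟩, hC⟩ := hsg
  simp only [thrEnd, thrStr] at hs hd
  rcases lt_trichotomy i' i with hlt | heq | hgt
  · -- main case : i' < i, so i ≥ 1, p ≥ 1
    have hp1 : 1 ≤ p := by omega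
    -- x0 ≥ n + 1
    have hx0n : (n : ℤ) + 1 ≤ x0 := by
      by_contra h
      push_neg at h
      refine hno 0 (by omega) ⟨x0.toNat, 0, ?_, by omega⟩
      push_cast [Int.toNat_of_nonneg hx0]
      ring
    -- x0 has an n-generation of order exactly p
    obtain ⟨q, hqp, hgenq⟩ := hA x0 hx0 hx3
    have hq : q = p := by
      by_contra h
      exact hno q (by omega) hgenq
    subst hq
    obtain ⟨c1g, g, hgen, hsumN⟩ := hgenq
    have hsumZ : (c1g : ℤ) + g ≤ (n : ℤ) + q := by exact_mod_cast hsumN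
    -- g(a2-1) ≥ q(a3-1) + 1
    have hg1 : (q : ℤ) * (a3 - 1) + 1 ≤ (g : ℤ) * (a2 - 1) := by nlinarith [hgen]
    -- key : (e - e')(a2 - 1) ≤ (i - i')(a3 - 1)
    have key : ((e : ℤ) - e') * (a2 - 1) ≤ ((i : ℤ) - i') * (a3 - 1) := by nlinarith [hd]
    -- (i - i')(a3 - 1) ≤ q (a3 - 1)
    have hii : ((i : ℤ) - i') * (a3 - 1) ≤ (q : ℤ) * (a3 - 1) := by
      have h1 : (0:ℤ) ≤ (q : ℤ) - ((i:ℤ) - i') := by omega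
      nlinarith [h1]
    have hDg : ((e : ℤ) - e') * (a2 - 1) < (g : ℤ) * (a2 - 1) := by linarith
    have hDg' : (e : ℤ) - e' < g := lt_of_mul_lt_mul_right hDg (by linarith)
    -- construct the generation of order m = q - (i - i')
    set m : ℕ := q - (i - i') with hmdef
    have hm : (m : ℤ) = (q : ℤ) - i + i' := by omega
    set C1 : ℤ := (c1g : ℤ) + ((e : ℤ) - e') * a2 - ((i : ℤ) - i') * a3 with hC1def
    set C2 : ℤ := (g : ℤ) + e' - e with hC2def
    have hC1 : 0 ≤ C1 := by
      have h0 : (0:ℤ) ≤ ((e : ℤ) - e') * a2 - ((i : ℤ) - i') * a3 := by linarith [hs]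
      have h1 : (0:ℤ) ≤ (c1g : ℤ) := Int.ofNat_nonneg c1g
      simp only [hC1def]; linarith
    have hC2 : 0 ≤ C2 := by simp only [hC2def]; linarith
    have hZ : C1 + C2 ≤ (n : ℤ) + m := by
      rw [hm]; simp only [hC1def, hC2def]; linarith [key, hsumZ]
    obtain ⟨c1n, hc1n⟩ := Int.eq_ofNat_of_zero_le hC1
    obtain ⟨c2n, hc2n⟩ := Int.eq_ofNat_of_zero_le hC2
    refine hno m (by omega) ⟨c1n, c2n, ?_, ?_⟩
    · rw [← hc1n, ← hc2n, hm]
      simp only [hC1def, hC2def]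
      linarith [hgen]
    · have : (c1n : ℤ) + c2n ≤ (n : ℤ) + m := by rw [← hc1n, ← hc2n]; exact hZ
      exact_mod_cast this
  · -- case i' = i : forces e' = e, contradicting distinctness
    subst heq
    have h1 : (e' : ℤ) * a2 ≤ (e : ℤ) * a2 := by linarith [hs]
    have h2 : (e : ℤ) * (a2 - 1) ≤ (e' : ℤ) * (a2 - 1) := by linarith [hd]
    have he1 : (e' : ℤ) ≤ e := le_of_mul_le_mul_right h1 (by linarith)
    have he2 : (e : ℤ) ≤ e' := le_of_mul_le_mul_right h2 (by linarith)
    have : e' = e := by omega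
    exact hne (by rw [this])
  · -- case i < i' : arithmetic contradiction
    exfalso
    have hJ : (1 : ℤ) ≤ (i' : ℤ) - i := by omega
    have k1 : ((e' : ℤ) - e) * a2 ≤ ((i' : ℤ) - i) * a3 := by linarith [hs]
    have k2 : ((i' : ℤ) - i) * (a3 - 1) ≤ ((e' : ℤ) - e) * (a2 - 1) := by linarith [hd]
    have t1 : (1 : ℤ) * (a3 - 1) ≤ ((i' : ℤ) - i) * (a3 - 1) :=
      mul_le_mul_of_nonneg_right hJ (by linarith)
    have hD1 : (1 : ℤ) ≤ (e' : ℤ) - e := by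
      by_contra h
      push_neg at h
      have hnp : ((e' : ℤ) - e) * (a2 - 1) ≤ 0 :=
        mul_nonpos_of_nonpos_of_nonneg (by linarith) (by linarith)
      linarith
    have hDJ : (e' : ℤ) - e ≤ (i' : ℤ) - i := by linarith
    have t2 : ((e' : ℤ) - e) * (a2 - 1) ≤ ((i' : ℤ) - i) * (a2 - 1) :=
      mul_le_mul_of_nonneg_right hDJ (by linarith)
    have t3 : ((i' : ℤ) - i) * (a3 - 1) ≤ ((i' : ℤ) - i) * (a2 - 1) := by linarith
    nlinarith [t3, hJ]
end

section
/- Let SG(A, n, p) be a stride generator. If no thread of order p+1 appears in the diagram, or some thread of order p+1 appearing in the diagram is covered by a distinct thread appearing in the diagram, then SG(A, n, p) is canonical. -/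
set_option maxHeartbeats 1000000 in
/-- Lemma 7: a stride generator is canonical if no thread of order `p+1` appears in the
diagram, or some thread of order `p+1` appearing is covered by a distinct appearing thread. -/
theorem stmt11 (a2 a3 : ℤ) (ha2 : 1 < a2) (ha3 : a2 < a3)
    (n p : ℕ) (hsg : IsSG a2 a3 n p)
    (hyp : (∀ e : ℕ, ¬ ThrAppears a2 a3 n e (p + 1)) ∨
      (∃ e : ℕ, ThrAppears a2 a3 n e (p + 1) ∧
        ∃ e' i' : ℕ, ThrAppears a2 a3 n e' i' ∧ (e', i') ≠ (e, p + 1) ∧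
          ThrCoversThr a2 a3 n e' i' e (p + 1))) :
    IsCanonicalSG a2 a3 n p := by
  classical
  have ha2pos : (0:ℤ) < a2 := by linarith
  have ha3pos : (0:ℤ) < a3 := by linarith
  refine ⟨hsg, ?_⟩
  rintro y ⟨hy0, hy3, hbrk⟩ i0 hgen0
  -- take the minimal order q of an (n-1)-generation of y
  have hex : ∃ i, HasGen a2 a3 (n-1) i y := ⟨i0, hgen0⟩
  obtain ⟨q, hq, hqmin⟩ : ∃ q, HasGen a2 a3 (n-1) q y ∧
      ∀ i, i < q → ¬ HasGen a2 a3 (n-1) i y :=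
    ⟨Nat.find hex, Nat.find_spec hex, fun i hi => Nat.find_min hex hi⟩
  have hqp : p + 2 ≤ q := by
    by_contra hlt
    push_neg at hlt
    exact hbrk q (by omega) hq
  obtain ⟨c1, c2, hz, hsum⟩ := hq
  -- the key inequality α : (p+1) a3 ≤ ((n-1)+p+1) a2
  have hsum' : (c1:ℤ) + c2 ≤ ((n-1 : ℕ):ℤ) + q := by exact_mod_cast hsum
  have hc1 : (0:ℤ) ≤ (c1:ℤ) := Int.natCast_nonneg c1
  have hc2 : (0:ℤ) ≤ (c2:ℤ) := Int.natCast_nonneg c2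
  have h1 : y + (q:ℤ) * a3 ≤ ((c1:ℤ) + c2) * a2 := by nlinarith
  obtain ⟨m, hm⟩ : ∃ m : ℕ, q = p + 2 + m := ⟨q - (p+2), by omega⟩
  have hqz : (q:ℤ) = (p:ℤ) + 2 + m := by exact_mod_cast hm
  have hma : ((m:ℤ) + 1) * a2 ≤ ((m:ℤ) + 1) * a3 := by
    apply mul_le_mul_of_nonneg_left (le_of_lt ha3)
    positivity
  have halpha : ((p:ℤ) + 1) * a3 ≤ (((n-1 : ℕ):ℤ) + p + 1) * a2 := by nlinarith
  rcases hyp with hcase1 | hcase2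
  · -- Case 1 : produce an appearing thread of order p+1
    have hdec : ∀ k : ℕ, Decidable (((p:ℤ) + 1) * a3 ≤ (k:ℤ) * a2) := fun k => inferInstance
    have hexk : ∃ k : ℕ, ((p:ℤ) + 1) * a3 ≤ (k:ℤ) * a2 := by
      refine ⟨(n-1) + p + 1, ?_⟩
      push_cast
      linarith [halpha]
    obtain ⟨k, hkspec, hkle, hkm1⟩ : ∃ k : ℕ, ((p:ℤ) + 1) * a3 ≤ (k:ℤ) * a2 ∧
        k ≤ (n-1) + p + 1 ∧ ¬ (((p:ℤ) + 1) * a3 ≤ ((k - 1 : ℕ):ℤ) * a2) := by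
      refine ⟨Nat.find hexk, Nat.find_spec hexk, ?_, ?_⟩
      · apply Nat.find_min'
        push_cast
        linarith [halpha]
      · have hkpos : Nat.find hexk ≠ 0 := by
          intro h0
          have := Nat.find_spec hexk
          rw [h0] at this
          push_cast at this
          nlinarith
        exact Nat.find_min hexk (by omega)
    push_neg at hkm1
    have hkpos : k ≠ 0 := by
      intro h0
      rw [h0] at hkspec
      push_cast at hkspec
      nlinarith
    have hkm1' : ((k:ℤ) - 1) * a2 < ((p:ℤ) + 1) * a3 := by
      have : ((k - 1 : ℕ):ℤ) = (k:ℤ) - 1 := by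
        have : 1 ≤ k := by omega
        push_cast [Nat.cast_sub this]
        ring
      rwa [this] at hkm1
    refine hcase1 k ⟨by omega, (k:ℤ) * a2 - ((p:ℤ) + 1) * a3, by linarith, ?_, ?_, ?_⟩
    · -- x < a3 : since x < a2 ≤ a3
      have : (k:ℤ) * a2 - ((p:ℤ) + 1) * a3 < a2 := by linarith
      linarith
    · -- thrStr ≤ x
      unfold thrStr
      push_cast
      linarith
    · -- x ≤ thrEnd
      unfold thrEnd thrStr
      push_cast
      have : (k:ℤ) ≤ (n:ℤ) + (p:ℤ) + 1 := by
        have h1 : (k:ℤ) ≤ ((n-1) + p + 1 : ℕ) := by exact_mod_cast hkle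
        have h2 : ((n-1) + p + 1 : ℕ) ≤ n + p + 1 := by omega
        have h2' : (((n-1) + p + 1 : ℕ):ℤ) ≤ ((n + p + 1 : ℕ):ℤ) := by exact_mod_cast h2
        push_cast at h2'
        linarith
      linarith
  · -- Case 2 : a covered appearing thread of order p+1 gives a smaller generation order
    obtain ⟨e, happE, e', i', happ', hne, hcov⟩ := hcase2
    obtain ⟨hele, x, hx0, hx3, hcv1, hcv2⟩ := happE
    have heup : (e:ℤ) * a2 ≤ ((p:ℤ) + 2) * a3 - 1 := by
      unfold thrStr at hcv1
      push_cast at hcv1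
      linarith
    obtain ⟨hS1, hS2⟩ := hcov
    simp only [thrEnd, thrStr] at hS1 hS2
    push_cast at hS1 hS2
    -- hS1 : e' * a2 - i' * a3 ≤ e * a2 - (p+1) * a3
    -- hS2 : e*a2 - (p+1)*a3 + (n + (p+1)) - e ≤ e'*a2 - i'*a3 + (n + i') - e'
    have hS1' : ((e':ℤ) - e) * a2 ≤ ((i':ℤ) - ((p:ℤ)+1)) * a3 := by ring_nf; ring_nf at hS1; linarith
    have hS2' : ((i':ℤ) - ((p:ℤ)+1)) * (a3 - 1) ≤ ((e':ℤ) - e) * (a2 - 1) := by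
      ring_nf; ring_nf at hS2; linarith
    -- show i' ≤ p
    have hii : (i':ℤ) ≤ (p:ℤ) + 1 := by
      by_contra hgt
      push_neg at hgt
      have hdi : (1:ℤ) ≤ (i':ℤ) - ((p:ℤ)+1) := by linarith
      have hA : ((e':ℤ) - e) * a2 * (a2-1) ≤ ((i':ℤ) - ((p:ℤ)+1)) * a3 * (a2-1) :=
        mul_le_mul_of_nonneg_right hS1' (by linarith)
      have hB : ((i':ℤ) - ((p:ℤ)+1)) * (a3-1) * a2 ≤ ((e':ℤ) - e) * (a2-1) * a2 :=
        mul_le_mul_of_nonneg_right hS2' (by linarith)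
      have heq : ((e':ℤ) - e) * (a2-1) * a2 = ((e':ℤ) - e) * a2 * (a2-1) := by ring
      have hC : ((i':ℤ) - ((p:ℤ)+1)) * (a3-1) * a2 ≤ ((i':ℤ) - ((p:ℤ)+1)) * a3 * (a2-1) :=
        le_trans (heq ▸ hB) hA
      have hD : ((i':ℤ) - ((p:ℤ)+1)) * (a3 - a2) ≤ 0 := by nlinarith [hC]
      nlinarith [mul_pos (by linarith : (0:ℤ) < (i':ℤ) - ((p:ℤ)+1))
        (by linarith : (0:ℤ) < a3 - a2)]
    have hip : i' ≤ p := by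
      rcases Nat.lt_or_ge i' (p+1) with h | h
      · omega
      · exfalso
        have hieq : (i':ℤ) = (p:ℤ) + 1 := by
          have : ((p+1 : ℕ):ℤ) ≤ (i':ℤ) := by exact_mod_cast h
          push_cast at this
          linarith
        rw [hieq] at hS1' hS2'
        simp only [sub_self, zero_mul] at hS1' hS2'
        have he1 : ((e':ℤ) - e) ≤ 0 := by nlinarith
        have he2 : (0:ℤ) ≤ ((e':ℤ) - e) := by nlinarith
        have : (e':ℤ) = (e:ℤ) := by linarith
        have hee : e' = e := by exact_mod_cast this
        have hieq' : i' = p + 1 := by exact_mod_cast hieq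
        exact hne (by rw [hee, hieq'])
    -- set J and S
    set J : ℤ := (p:ℤ) + 1 - i' with hJdef
    set S : ℤ := (e:ℤ) - e' with hSdef
    have hJ1 : 1 ≤ J := by
      have : (i':ℤ) ≤ (p:ℤ) := by exact_mod_cast hip
      simp only [hJdef]
      linarith
    have hdnn : 0 ≤ S * a2 - J * a3 := by
      simp only [hSdef, hJdef]
      ring_nf
      ring_nf at hS1'
      linarith
    have hdsj : S * a2 - J * a3 ≤ S - J := by
      simp only [hSdef, hJdef]
      ring_nf
      ring_nf at hS2'
      linarith
    have hS1le : 1 ≤ S := by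
      by_contra hcon
      push_neg at hcon
      have h0 : S ≤ 0 := by linarith
      have h1 : S * a2 ≤ 0 := mul_nonpos_iff.mpr (Or.inr ⟨h0, le_of_lt ha2pos⟩)
      have h2 : (1:ℤ) * a3 ≤ J * a3 := mul_le_mul_of_nonneg_right hJ1 (le_of_lt ha3pos)
      linarith
    -- maximal representation of z = y + q a3
    set z : ℤ := y + (q:ℤ) * a3 with hzdef
    have hz0 : 0 ≤ z := by
      have : (0:ℤ) ≤ (q:ℤ) * a3 := by positivity
      simp only [hzdef]; linarith
    set e0 : ℤ := z / a2 with he0def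
    set r0 : ℤ := z % a2 with hr0def
    have hzer : a2 * (z / a2) + z % a2 = z := Int.mul_ediv_add_emod z a2
    have hzer' : z = e0 * a2 + r0 := by simp only [he0def, hr0def]; linarith [hzer]
    have hr0nn : 0 ≤ r0 := Int.emod_nonneg z (by linarith)
    have hr0lt : r0 < a2 := Int.emod_lt_of_pos z ha2pos
    -- weight bound : e0 + r0 ≤ c1 + c2
    have hwt : e0 + r0 ≤ (c1:ℤ) + c2 := by
      have hzc : z = (c2:ℤ) * a2 + c1 := hz
      set t : ℤ := e0 - c2 with htdef
      have hteq : t * a2 = (c1:ℤ) - r0 := by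
        have h5 : e0 * a2 + r0 = (c2:ℤ) * a2 + c1 := by rw [← hzer']; exact hzc
        simp only [htdef]
        linear_combination h5
      have htnn : 0 ≤ t := by
        by_contra htneg
        push_neg at htneg
        have hm1 : t ≤ -1 := by omega
        have : t * a2 ≤ (-1) * a2 := mul_le_mul_of_nonneg_right hm1 (le_of_lt ha2pos)
        linarith
      have hta : t * 1 ≤ t * a2 := mul_le_mul_of_nonneg_left (by linarith) htnn
      have hte : t = e0 - c2 := htdef
      linarith
    -- e0 ≥ e
    have hzlb : ((p:ℤ) + 2) * a3 ≤ z := by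
      have hq' : ((p:ℤ) + 2) ≤ (q:ℤ) := by exact_mod_cast hqp
      have : ((p:ℤ) + 2) * a3 ≤ (q:ℤ) * a3 :=
        mul_le_mul_of_nonneg_right hq' (le_of_lt ha3pos)
      simp only [hzdef]
      linarith
    have hee0 : (e:ℤ) ≤ e0 := by
      have hmul : (e:ℤ) * a2 ≤ z := by linarith
      simp only [he0def]
      exact (Int.le_ediv_iff_mul_le ha2pos).mpr hmul
    have hSe : S ≤ (e:ℤ) := by
      simp only [hSdef]
      have : (0:ℤ) ≤ (e':ℤ) := Int.natCast_nonneg e'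
      linarith
    have hSe0 : S ≤ e0 := le_trans hSe hee0
    -- construct a generation of order q - j, j = p+1-i'
    set j : ℕ := p + 1 - i' with hjdef
    have hjJ : (j:ℤ) = J := by
      simp only [hjdef, hJdef]
      have : i' ≤ p + 1 := by omega
      push_cast [Nat.cast_sub this]
      ring
    have hjq : j ≤ q := by omega
    have hj1 : 1 ≤ j := by
      have : (1:ℤ) ≤ (j:ℤ) := by rw [hjJ]; exact hJ1
      exact_mod_cast this
    have hq'lt : q - j < q := by omega
    apply hqmin (q - j) hq'lt
    refine ⟨(r0 + (S * a2 - J * a3)).toNat, (e0 - S).toNat, ?_, ?_⟩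
    · -- the equation
      have hc2' : (((e0 - S).toNat : ℕ):ℤ) = e0 - S := Int.toNat_of_nonneg (by linarith)
      have hc1' : (((r0 + (S * a2 - J * a3)).toNat : ℕ):ℤ) = r0 + (S * a2 - J * a3) :=
        Int.toNat_of_nonneg (by linarith)
      rw [hc1', hc2']
      have hqj : ((q - j : ℕ):ℤ) = (q:ℤ) - j := by push_cast [Nat.cast_sub hjq]; ring
      rw [hqj, hjJ]
      have h8 : y + (q:ℤ) * a3 = e0 * a2 + r0 := by rw [← hzdef]; exact hzer'
      linear_combination h8
    · -- the sum bound
      have hc2' : (((e0 - S).toNat : ℕ):ℤ) = e0 - S := Int.toNat_of_nonneg (by linarith)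
      have hc1' : (((r0 + (S * a2 - J * a3)).toNat : ℕ):ℤ) = r0 + (S * a2 - J * a3) :=
        Int.toNat_of_nonneg (by linarith)
      have hsumZ : (((r0 + (S * a2 - J * a3)).toNat : ℕ):ℤ) + (((e0 - S).toNat : ℕ):ℤ)
          ≤ ((n - 1 + (q - j) : ℕ):ℤ) := by
        rw [hc1', hc2']
        have hcast : ((n - 1 + (q - j) : ℕ):ℤ) = ((n-1 : ℕ):ℤ) + (q:ℤ) - (j:ℤ) := by
          push_cast [Nat.cast_sub hjq]
          ring
        rw [hcast, hjJ]
        linarith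
      exact_mod_cast hsumZ
end

section
/- If SG(A, n, p) is a canonical stride generator, then for no n' < n and no p' is SG(A, n', p') a stride generator. -/
/-- Lemma 13: if `SG(A, n, p)` is a canonical stride generator, then no stride generator
`SG(A, n', p')` exists for `n' < n`. -/
theorem stmt16 (a2 a3 : ℤ) (ha2 : 1 < a2) (ha3 : a2 < a3)
    (n p : ℕ) (hc : IsCanonicalSG a2 a3 n p) :
    ∀ n' : ℕ, n' < n → ∀ p' : ℕ, ¬ IsSG a2 a3 n' p' := by
  intro n' hn' p' hsg
  obtain ⟨hsgn, hbrk⟩ := hc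
  obtain ⟨_, _, y, hy0, hy3, hyno⟩ := hsgn
  have hcan : IsCanonicalBreak a2 a3 n y := hbrk y ⟨hy0, hy3, hyno⟩
  obtain ⟨i, _, c1, c2, heq, hle⟩ := hsg.1 y hy0 hy3
  exact hcan i ⟨c1, c2, heq, hle.trans (by omega)⟩
end

section
/- If SG(A, n, p) is a fundamental stride generator with p ≤ 1 (that is, of order 0 or 1), then SG(A, n, p) is canonical. Equivalently, every non-canonical fundamental stride generator has order p ≥ 2. -/
def mu (a2 t : ℤ) : ℤ := t / a2 + t % a2

lemma div_spec {a2 : ℤ} (ha2 : 0 < a2) {x k r : ℤ} (hx : x = k * a2 + r)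
    (h0 : 0 ≤ r) (h1 : r < a2) : x / a2 = k ∧ x % a2 = r := by
  have hne : a2 ≠ 0 := by omega
  constructor
  · rw [hx, show k * a2 + r = r + k * a2 by ring, Int.add_mul_ediv_right _ _ hne,
      Int.ediv_eq_zero_of_lt h0 h1]
    ring
  · rw [hx, show k * a2 + r = r + k * a2 by ring, Int.add_mul_emod_self_right,
      Int.emod_eq_of_lt h0 h1]

lemma mu_spec {a2 : ℤ} (ha2 : 0 < a2) {x k r : ℤ} (hx : x = k * a2 + r)
    (h0 : 0 ≤ r) (h1 : r < a2) : mu a2 x = k + r := by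
  obtain ⟨hd, hm⟩ := div_spec ha2 hx h0 h1
  unfold mu; rw [hd, hm]

lemma mu_min {a2 : ℤ} (ha2 : 1 < a2) {t : ℤ} {c1 c2 : ℤ} (h1 : 0 ≤ c1) (h2 : 0 ≤ c2)
    (ht : t = c2 * a2 + c1) : mu a2 t ≤ c2 + c1 := by
  have hne : a2 ≠ 0 := by omega
  have hd : t / a2 = c1 / a2 + c2 := by
    rw [ht, show c2 * a2 + c1 = c1 + c2 * a2 by ring, Int.add_mul_ediv_right _ _ hne]
  have hm : t % a2 = c1 % a2 := by
    rw [ht, show c2 * a2 + c1 = c1 + c2 * a2 by ring, Int.add_mul_emod_self_right]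
  have q0 : 0 ≤ c1 / a2 := Int.ediv_nonneg h1 (by omega)
  have he : a2 * (c1 / a2) + c1 % a2 = c1 := Int.mul_ediv_add_emod c1 a2
  have : c1 / a2 + c1 % a2 ≤ c1 := by nlinarith
  unfold mu; rw [hd, hm]; linarith

lemma step_no {a2 a3 t : ℤ} (ha2 : 1 < a2) (h : t % a2 + a3 % a2 < a2) :
    mu a2 (t + a3) = mu a2 t + a3 / a2 + a3 % a2 ∧ (t + a3) % a2 = t % a2 + a3 % a2 := by
  have h2 : 0 < a2 := by omega
  have ht : a2 * (t / a2) + t % a2 = t := Int.mul_ediv_add_emod t a2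
  have ha : a2 * (a3 / a2) + a3 % a2 = a3 := Int.mul_ediv_add_emod a3 a2
  have hr0 : 0 ≤ t % a2 := Int.emod_nonneg t (by omega)
  have hs0 : 0 ≤ a3 % a2 := Int.emod_nonneg a3 (by omega)
  have hx : t + a3 = (t / a2 + a3 / a2) * a2 + (t % a2 + a3 % a2) := by
    linear_combination - ht - ha
  obtain ⟨hd, hm⟩ := div_spec h2 hx (by omega) h
  exact ⟨by unfold mu; rw [hd, hm]; ring, hm⟩

lemma step_ov {a2 a3 t : ℤ} (ha2 : 1 < a2) (h : a2 ≤ t % a2 + a3 % a2) :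
    mu a2 (t + a3) = mu a2 t + a3 / a2 + a3 % a2 + 1 - a2 ∧
      (t + a3) % a2 = t % a2 + a3 % a2 - a2 := by
  have h2 : 0 < a2 := by omega
  have ht : a2 * (t / a2) + t % a2 = t := Int.mul_ediv_add_emod t a2
  have ha : a2 * (a3 / a2) + a3 % a2 = a3 := Int.mul_ediv_add_emod a3 a2
  have hr1 : t % a2 < a2 := Int.emod_lt_of_pos t h2
  have hs1 : a3 % a2 < a2 := Int.emod_lt_of_pos a3 h2
  have hx : t + a3 = (t / a2 + a3 / a2 + 1) * a2 + (t % a2 + a3 % a2 - a2) := by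
    linear_combination - ht - ha
  obtain ⟨hd, hm⟩ := div_spec h2 hx (by omega) (by omega)
  exact ⟨by unfold mu; rw [hd, hm]; ring, hm⟩

lemma alpha_pos {a2 a3 : ℤ} (ha2 : 1 < a2) (ha3 : a2 < a3) : 1 ≤ a3 / a2 :=
  (Int.le_ediv_iff_mul_le (by omega)).mpr (by rw [one_mul]; omega)

lemma core_mono {a2 a3 : ℤ} (ha2 : 1 < a2) (ha3 : a2 < a3)
    (hdeg : a3 % a2 = 0 ∨ a2 ≤ a3 / a2 + a3 % a2) (N y : ℤ) (hb0 : N ≤ mu a2 y) :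
    ∀ i : ℕ, N + i ≤ mu a2 (y + i * a3) := by
  have hA1 : 1 ≤ a3 / a2 := alpha_pos ha2 ha3
  have hs0 : 0 ≤ a3 % a2 := Int.emod_nonneg a3 (by omega)
  intro i
  induction i with
  | zero => simpa using hb0
  | succ k ih =>
    have hstep : mu a2 (y + (k : ℤ) * a3) + 1 ≤ mu a2 (y + (k : ℤ) * a3 + a3) := by
      by_cases h : (y + (k : ℤ) * a3) % a2 + a3 % a2 < a2
      · obtain ⟨he, _⟩ := step_no (a3 := a3) ha2 h
        linarith
      · push_neg at h
        obtain ⟨he, _⟩ := step_ov (a3 := a3) ha2 h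
        rcases hdeg with h0 | h0
        · exfalso
          have : (y + (k : ℤ) * a3) % a2 < a2 := Int.emod_lt_of_pos _ (by omega)
          omega
        · linarith
    have hrw : y + ((k : ℕ) + 1 : ℕ) * a3 = y + (k : ℤ) * a3 + a3 := by push_cast; ring
    rw [hrw]
    push_cast
    push_cast at ih
    linarith

lemma core_inv {a2 a3 : ℤ} (ha2 : 1 < a2) (ha3 : a2 < a3)
    (hC1 : 2 * (a3 % a2) ≤ a2) (hC2 : a2 + 1 ≤ 2 * (a3 / a2) + 2 * (a3 % a2))
    (N y : ℤ) (hb0 : N ≤ mu a2 y)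
    (hQ0 : a2 ≤ y % a2 + a3 % a2 → N + (a2 - a3 / a2 - a3 % a2) ≤ mu a2 y) :
    ∀ i : ℕ, N + i ≤ mu a2 (y + i * a3) := by
  have hA1 : 1 ≤ a3 / a2 := alpha_pos ha2 ha3
  have hs0 : 0 ≤ a3 % a2 := Int.emod_nonneg a3 (by omega)
  have key : ∀ i : ℕ, N + i ≤ mu a2 (y + i * a3) ∧
      (a2 ≤ (y + i * a3) % a2 + a3 % a2 →
        N + i + (a2 - a3 / a2 - a3 % a2) ≤ mu a2 (y + i * a3)) := by
    intro i
    induction i with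
    | zero =>
      constructor
      · simpa using hb0
      · simpa using hQ0
    | succ k ih =>
      obtain ⟨ih1, ih2⟩ := ih
      have hrw : y + ((k : ℕ) + 1 : ℕ) * a3 = y + (k : ℤ) * a3 + a3 := by push_cast; ring
      rw [hrw]
      by_cases h : (y + (k : ℤ) * a3) % a2 + a3 % a2 < a2
      · obtain ⟨he, hm⟩ := step_no (a3 := a3) ha2 h
        constructor
        · rw [he]; push_cast; linarith
        · intro _; rw [he]; push_cast; linarith
      · push_neg at h
        obtain ⟨he, hm⟩ := step_ov (a3 := a3) ha2 h
        have hx := ih2 h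
        constructor
        · rw [he]; push_cast; linarith
        · intro hov2
          exfalso
          rw [hm] at hov2
          have h1 : (y + (k : ℤ) * a3) % a2 < a2 := Int.emod_lt_of_pos _ (by omega)
          linarith
  intro i; exact (key i).1

lemma core0 {a2 a3 : ℤ} (ha2 : 1 < a2) (ha3 : a2 < a3) (N y : ℤ)
    (hy0 : 0 ≤ y) (hy1 : y < a3)
    (hA : ∀ x : ℤ, 0 ≤ x → x < a3 → mu a2 x ≤ N)
    (hb0 : N ≤ mu a2 y) (hb1 : N + 1 ≤ mu a2 (y + 1 * a3)) :
    ∀ i : ℕ, N + i ≤ mu a2 (y + i * a3) := by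
  have h2 : 0 < a2 := by omega
  have hA1 : 1 ≤ a3 / a2 := alpha_pos ha2 ha3
  have hs0 : 0 ≤ a3 % a2 := Int.emod_nonneg a3 (by omega)
  have hs1 : a3 % a2 < a2 := Int.emod_lt_of_pos a3 h2
  have hAB : a2 * (a3 / a2) + a3 % a2 = a3 := Int.mul_ediv_add_emod a3 a2
  by_cases hdeg : a3 % a2 = 0 ∨ a2 ≤ a3 / a2 + a3 % a2
  · exact core_mono ha2 ha3 hdeg N y hb0
  push_neg at hdeg
  obtain ⟨hB1', hD⟩ := hdeg
  have hB1 : 1 ≤ a3 % a2 := by omega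
  exfalso
  -- (A) at x1 = (a3/a2)*a2 - 1
  have hx1nn : (0:ℤ) ≤ (a3 / a2) * a2 - 1 := by nlinarith
  have hx1lt : (a3 / a2) * a2 - 1 < a3 := by nlinarith
  have hmux1 : mu a2 ((a3 / a2) * a2 - 1) = a3 / a2 + a2 - 2 := by
    have := mu_spec h2 (show (a3 / a2) * a2 - 1 = (a3 / a2 - 1) * a2 + (a2 - 1) by ring)
      (by omega) (by omega)
    linarith
  have hN1 : a3 / a2 + a2 - 2 ≤ N := by
    have := hA _ hx1nn hx1lt; linarith
  -- y decomposition
  have hyrep : a2 * (y / a2) + y % a2 = y := Int.mul_ediv_add_emod y a2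
  have hr00 : 0 ≤ y % a2 := Int.emod_nonneg y (by omega)
  have hr01 : y % a2 < a2 := Int.emod_lt_of_pos y h2
  have hc20 : 0 ≤ y / a2 := Int.ediv_nonneg hy0 (by omega)
  have hmuy : mu a2 y = y / a2 + y % a2 := rfl
  by_cases hr0B : y % a2 < a3 % a2
  · -- c2 ≤ a3/a2
    have hc2le : y / a2 ≤ a3 / a2 := by
      by_contra hcon; push_neg at hcon
      have := mul_le_mul_of_nonneg_left (show a3 / a2 + 1 ≤ y / a2 by omega)
        (show (0:ℤ) ≤ a2 by omega)
      nlinarith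
    linarith
  · push_neg at hr0B
    have hc2le : y / a2 ≤ a3 / a2 - 1 := by
      by_contra hcon; push_neg at hcon
      have := mul_le_mul_of_nonneg_left (show a3 / a2 ≤ y / a2 by omega)
        (show (0:ℤ) ≤ a2 by omega)
      nlinarith
    -- forces y % a2 = a2 - 1, overflow at step 0
    have hr0eq : y % a2 = a2 - 1 := by linarith
    obtain ⟨he1, _⟩ := step_ov (t := y) (a3 := a3) ha2 (by omega)
    rw [show y + 1 * a3 = y + a3 by ring] at hb1
    rw [he1] at hb1
    linarith

lemma core1 {a2 a3 : ℤ} (ha2 : 1 < a2) (ha3 : a2 < a3) (N y : ℤ)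
    (hy0 : 0 ≤ y) (hy1 : y < a3)
    (hA : ∀ x : ℤ, 0 ≤ x → x < a3 → mu a2 x ≤ N ∨ mu a2 (x + a3) ≤ N + 1)
    (hb0 : N ≤ mu a2 y) (hb1 : N + 1 ≤ mu a2 (y + 1 * a3))
    (hb2 : N + 2 ≤ mu a2 (y + 2 * a3)) :
    ∀ i : ℕ, N + i ≤ mu a2 (y + i * a3) := by
  have h2 : 0 < a2 := by omega
  have hA1 : 1 ≤ a3 / a2 := alpha_pos ha2 ha3
  have hs0 : 0 ≤ a3 % a2 := Int.emod_nonneg a3 (by omega)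
  have hs1 : a3 % a2 < a2 := Int.emod_lt_of_pos a3 h2
  have hAB : a2 * (a3 / a2) + a3 % a2 = a3 := Int.mul_ediv_add_emod a3 a2
  by_cases hdeg : a3 % a2 = 0 ∨ a2 ≤ a3 / a2 + a3 % a2
  · exact core_mono ha2 ha3 hdeg N y hb0
  push_neg at hdeg
  obtain ⟨hB1', hD⟩ := hdeg
  have hB1 : 1 ≤ a3 % a2 := by omega
  -- (A) at x1 = (a3/a2)*a2 - 1 : gives 2*(a3/a2) + a3%a2 - 2 ≤ N
  have hx1nn : (0:ℤ) ≤ (a3 / a2) * a2 - 1 := by nlinarith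
  have hx1lt : (a3 / a2) * a2 - 1 < a3 := by nlinarith
  have hNx1 : 2 * (a3 / a2) + a3 % a2 - 2 ≤ N := by
    have hmux1 : mu a2 ((a3 / a2) * a2 - 1) = a3 / a2 + a2 - 2 := by
      have := mu_spec h2 (show (a3 / a2) * a2 - 1 = (a3 / a2 - 1) * a2 + (a2 - 1) by ring)
        (by omega) (by omega)
      linarith
    have hmux1' : mu a2 ((a3 / a2) * a2 - 1 + a3) = 2 * (a3 / a2) + a3 % a2 - 1 := by
      have := mu_spec h2
        (show (a3 / a2) * a2 - 1 + a3 = (2 * (a3 / a2)) * a2 + (a3 % a2 - 1) by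
          linear_combination -hAB)
        (by omega) (by omega)
      linarith
    rcases hA _ hx1nn hx1lt with h | h
    · linarith
    · linarith
  -- (A) at x2 = (a3/a2)*a2 - (a3%a2) - 1, valid when 2*(a3%a2)+1 ≤ a2
  have hNx2 : 2 * (a3 % a2) + 1 ≤ a2 → a3 / a2 + a2 - a3 % a2 - 2 ≤ N := by
    intro hbig
    have hx2nn : (0:ℤ) ≤ (a3 / a2) * a2 - (a3 % a2) - 1 := by nlinarith
    have hx2lt : (a3 / a2) * a2 - (a3 % a2) - 1 < a3 := by nlinarith
    have hmux2 : mu a2 ((a3 / a2) * a2 - (a3 % a2) - 1) = a3 / a2 + a2 - a3 % a2 - 2 := by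
      have := mu_spec h2 (show (a3 / a2) * a2 - (a3 % a2) - 1
          = (a3 / a2 - 1) * a2 + (a2 - a3 % a2 - 1) by ring) (by omega) (by omega)
      linarith
    have hmux2' : mu a2 ((a3 / a2) * a2 - (a3 % a2) - 1 + a3) = 2 * (a3 / a2) + a2 - 2 := by
      have := mu_spec h2 (show (a3 / a2) * a2 - (a3 % a2) - 1 + a3
          = (2 * (a3 / a2) - 1) * a2 + (a2 - 1) by linear_combination -hAB)
        (by omega) (by omega)
      linarith
    rcases hA _ hx2nn hx2lt with h | h
    · linarith
    · linarith
  -- y decomposition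
  have hyrep : a2 * (y / a2) + y % a2 = y := Int.mul_ediv_add_emod y a2
  have hr00 : 0 ≤ y % a2 := Int.emod_nonneg y (by omega)
  have hr01 : y % a2 < a2 := Int.emod_lt_of_pos y h2
  have hc20 : 0 ≤ y / a2 := Int.ediv_nonneg hy0 (by omega)
  have hmuy : mu a2 y = y / a2 + y % a2 := rfl
  have hc2le : y / a2 ≤ a3 / a2 := by
    by_contra hcon; push_neg at hcon
    have := mul_le_mul_of_nonneg_left (show a3 / a2 + 1 ≤ y / a2 by omega)
      (show (0:ℤ) ≤ a2 by omega)
    nlinarith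
  have hc2le' : a3 % a2 ≤ y % a2 → y / a2 ≤ a3 / a2 - 1 := by
    intro h
    by_contra hcon; push_neg at hcon
    have := mul_le_mul_of_nonneg_left (show a3 / a2 ≤ y / a2 by omega)
      (show (0:ℤ) ≤ a2 by omega)
    nlinarith
  by_cases hov0 : y % a2 + a3 % a2 < a2
  · -- no carry at step 0
    obtain ⟨he1, hm1⟩ := step_no (t := y) (a3 := a3) ha2 hov0
    by_cases hr0B : y % a2 < a3 % a2
    · -- case 1a: forces a3/a2 = 1, y%a2 = a3%a2 - 1
      have hAeq : a3 / a2 = 1 := by linarith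
      have hr0eq : y % a2 = a3 % a2 - 1 := by linarith
      have hC1 : 2 * (a3 % a2) ≤ a2 := by omega
      have hC2 : a2 + 1 ≤ 2 * (a3 / a2) + 2 * (a3 % a2) := by
        by_contra hcon; push_neg at hcon
        have := hNx2 (by omega)
        linarith
      exact core_inv ha2 ha3 hC1 hC2 N y hb0 (fun h => absurd h (by omega))
    · -- case 1b
      push_neg at hr0B
      have hc2b := hc2le' hr0B
      have hbig : 2 * (a3 % a2) + 1 ≤ a2 := by omega
      have hx2 := hNx2 hbig
      have hr0eq : y % a2 = a2 - a3 % a2 - 1 := by omega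
      -- step 1 overflows
      obtain ⟨he2, _⟩ := step_ov (t := y + a3) (a3 := a3) ha2 (by rw [hm1]; omega)
      rw [show y + 2 * a3 = y + a3 + a3 by ring] at hb2
      rw [he2, he1] at hb2
      have hC2 : a2 + 1 ≤ 2 * (a3 / a2) + 2 * (a3 % a2) := by linarith
      exact core_inv ha2 ha3 (by omega) hC2 N y hb0 (fun h => absurd h (by omega))
  · -- carry at step 0 (case 2)
    push_neg at hov0
    obtain ⟨he1, hm1⟩ := step_ov (t := y) (a3 := a3) ha2 hov0
    rw [show y + 1 * a3 = y + a3 by ring, he1] at hb1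
    -- hb1 : N + 1 ≤ mu a2 y + a3/a2 + a3%a2 + 1 - a2, i.e. mu y ≥ N + D
    by_cases hr0B : y % a2 < a3 % a2
    · -- case 2b : contradiction
      exfalso
      have := mul_le_mul_of_nonneg_left hc2le (show (0:ℤ) ≤ a2 by omega)
      -- N + (a2 - A - B) ≤ mu y = c2 + r0 ≤ A + r0 ; with hNx1 get r0 ≥ a2-2, r0 ≤ B-1
      omega
    · -- case 2a
      push_neg at hr0B
      have hc2b := hc2le' hr0B
      have := mul_le_mul_of_nonneg_left hc2b (show (0:ℤ) ≤ a2 by omega)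
      have hr0eq : y % a2 = a2 - 1 := by omega
      have hC1 : 2 * (a3 % a2) ≤ a2 := by
        by_contra hcon; push_neg at hcon
        obtain ⟨he2, _⟩ := step_ov (t := y + a3) (a3 := a3) ha2 (by rw [hm1]; omega)
        rw [show y + 2 * a3 = y + a3 + a3 by ring] at hb2
        rw [he2, he1] at hb2
        omega
      have hC2 : a2 + 1 ≤ 2 * (a3 / a2) + 2 * (a3 % a2) := by
        rcases eq_or_lt_of_le hC1 with h | h
        · omega
        · have := hNx2 (by omega)
          omega
      exact core_inv ha2 ha3 hC1 hC2 N y hb0 (fun _ => by linarith)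

lemma hasGen_of_mu {a2 a3 : ℤ} (ha2 : 1 < a2) {m i : ℕ} {x : ℤ} (hx : 0 ≤ x + (i : ℤ) * a3)
    (h : mu a2 (x + (i : ℤ) * a3) ≤ (m : ℤ) + i) : HasGen a2 a3 m i x := by
  have hd0 : 0 ≤ (x + (i : ℤ) * a3) / a2 := Int.ediv_nonneg hx (by omega)
  have hm0 : 0 ≤ (x + (i : ℤ) * a3) % a2 := Int.emod_nonneg _ (by omega)
  have hde : a2 * ((x + (i : ℤ) * a3) / a2) + (x + (i : ℤ) * a3) % a2 = x + (i : ℤ) * a3 :=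
    Int.mul_ediv_add_emod _ a2
  refine ⟨((x + (i : ℤ) * a3) % a2).toNat, ((x + (i : ℤ) * a3) / a2).toNat, ?_, ?_⟩
  · push_cast [Int.toNat_of_nonneg hd0, Int.toNat_of_nonneg hm0]
    linarith
  · have hh : (((x + (i : ℤ) * a3) % a2).toNat + ((x + (i : ℤ) * a3) / a2).toNat : ℤ)
        ≤ ((m + i : ℕ) : ℤ) := by
      push_cast [Int.toNat_of_nonneg hd0, Int.toNat_of_nonneg hm0]
      unfold mu at h
      linarith
    exact_mod_cast hh

lemma mu_of_hasGen {a2 a3 : ℤ} (ha2 : 1 < a2) {m i : ℕ} {x : ℤ} (h : HasGen a2 a3 m i x) :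
    mu a2 (x + (i : ℤ) * a3) ≤ (m : ℤ) + i := by
  obtain ⟨c1, c2, heq, hle⟩ := h
  have h1 := mu_min ha2 (c1 := (c1 : ℤ)) (c2 := (c2 : ℤ)) (by positivity) (by positivity) heq
  have h2 : ((c1 + c2 : ℕ) : ℤ) ≤ ((m + i : ℕ) : ℤ) := by exact_mod_cast hle
  push_cast at h2
  linarith

lemma final_core {a2 a3 : ℤ} (ha2 : 1 < a2) (ha3 : a2 < a3) {n p : ℕ} (hp : p ≤ 1)
    (hAgen : ∀ x : ℤ, 0 ≤ x → x < a3 → ∃ j ≤ p, HasGen a2 a3 n j x)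
    {y : ℤ} (hy0 : 0 ≤ y) (hy1 : y < a3)
    (hbr : ∀ j : ℕ, j ≤ p + 1 → ¬ HasGen a2 a3 (n - 1) j y) :
    ∀ i : ℕ, ¬ HasGen a2 a3 (n - 1) i y := by
  have ha3p : (0:ℤ) < a3 := by linarith
  set m := n - 1 with hm
  have hnm : (n : ℤ) ≤ (m : ℤ) + 1 := by
    have : n ≤ m + 1 := by omega
    exact_mod_cast this
  have hbmu : ∀ j : ℕ, j ≤ p + 1 → ((m : ℤ) + 1) + j ≤ mu a2 (y + (j : ℤ) * a3) := by
    intro j hj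
    by_contra hcon; push_neg at hcon
    have hnn : (0:ℤ) ≤ y + (j : ℤ) * a3 := by positivity
    exact hbr j hj (hasGen_of_mu ha2 hnn (by linarith))
  intro i hgen
  have h1 := mu_of_hasGen ha2 hgen
  have hb0 : (m : ℤ) + 1 ≤ mu a2 y := by
    have := hbmu 0 (by omega); push_cast at this
    rw [show y + (0:ℤ) * a3 = y by ring] at this; linarith
  have hb1 : ((m : ℤ) + 1) + 1 ≤ mu a2 (y + 1 * a3) := by
    have := hbmu 1 (by omega); push_cast at this; push_cast; linarith
  interval_cases p
  · have hAx : ∀ x : ℤ, 0 ≤ x → x < a3 → mu a2 x ≤ (m : ℤ) + 1 := by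
      intro x hx0 hx1
      obtain ⟨j, hj, hg⟩ := hAgen x hx0 hx1
      have hj0 : j = 0 := by omega
      subst hj0
      have := mu_of_hasGen ha2 hg
      push_cast at this
      simp only [zero_mul, add_zero] at this
      linarith
    have hc := core0 ha2 ha3 ((m : ℤ) + 1) y hy0 hy1 hAx hb0 hb1 i
    linarith
  · have hb2 : ((m : ℤ) + 1) + 2 ≤ mu a2 (y + 2 * a3) := by
      have := hbmu 2 (by omega); push_cast at this; push_cast; linarith
    have hAx : ∀ x : ℤ, 0 ≤ x → x < a3 →
        mu a2 x ≤ (m : ℤ) + 1 ∨ mu a2 (x + a3) ≤ ((m : ℤ) + 1) + 1 := by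
      intro x hx0 hx1
      obtain ⟨j, hj, hg⟩ := hAgen x hx0 hx1
      have := mu_of_hasGen ha2 hg
      interval_cases j
      · left
        push_cast at this
        simp only [zero_mul, add_zero] at this
        linarith
      · right
        push_cast at this
        rw [show x + (1:ℤ) * a3 = x + a3 by ring] at this
        linarith
    have hc := core1 ha2 ha3 ((m : ℤ) + 1) y hy0 hy1 hAx hb0 hb1 hb2 i
    linarith

/-- Lemma 14 (first part): a fundamental stride generator of order 0 or 1 is canonical;
equivalently, every non-canonical fundamental stride generator has order `p ≥ 2`. -/
theorem stmt17 (a2 a3 : ℤ) (ha2 : 1 < a2) (ha3 : a2 < a3)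
    (n p : ℕ) (hf : IsFundamentalSG a2 a3 n p) (hp : p ≤ 1) :
    IsCanonicalSG a2 a3 n p := by
  obtain ⟨hSG, -⟩ := hf
  refine ⟨hSG, ?_⟩
  rintro y ⟨hy0, hy1, hbr⟩
  exact final_core ha2 ha3 hp hSG.1 hy0 hy1 hbr
end

section
/- Write a_3 = C_2*a_2 + C_1 with 0 ≤ C_1 < a_2. If SG(A, n, p) is a fundamental stride generator and either C_1 = 0 or a_2 − C_2 ≤ C_1 < a_2, then p = 0. -/
/-- Normalization: any representation `v = c2*a2 + c1` can be replaced by one with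
`c1 < a2` and no larger total weight. -/
lemma aux_reduce (a2 : ℤ) (ha2 : 1 < a2) (v : ℤ) :
    ∀ c1 c2 : ℕ, v = (c2 : ℤ) * a2 + (c1 : ℤ) →
      ∃ d1 d2 : ℕ, v = (d2 : ℤ) * a2 + (d1 : ℤ) ∧ (d1 : ℤ) < a2 ∧ d1 + d2 ≤ c1 + c2 := by
  intro c1
  induction c1 using Nat.strong_induction_on with
  | _ c1 ih =>
    intro c2 hv
    by_cases h : (c1 : ℤ) < a2
    · exact ⟨c1, c2, hv, h, le_rfl⟩
    · push_neg at h
      have ha2' : a2.toNat ≤ c1 := by omega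
      have hlt : c1 - a2.toNat < c1 := by omega
      have hv' : v = ((c2 + 1 : ℕ) : ℤ) * a2 + ((c1 - a2.toNat : ℕ) : ℤ) := by
        push_cast [ha2']
        have : ((a2.toNat : ℤ)) = a2 := by omega
        rw [hv]; rw [this]; ring
      obtain ⟨d1, d2, h1, h2, h3⟩ := ih _ hlt (c2 + 1) hv'
      exact ⟨d1, d2, h1, h2, by omega⟩

/-- Descent: under the hypothesis, an `n`-generation of order `i+1` yields one of order `i`. -/
lemma aux_descent (a2 a3 C2 C1 : ℤ) (ha2 : 1 < a2) (ha3 : a2 < a3)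
    (hC : a3 = C2 * a2 + C1) (hC1 : 0 ≤ C1) (hC1' : C1 < a2)
    (hyp : C1 = 0 ∨ a2 - C2 ≤ C1) (n i : ℕ) (x : ℤ) (hx : 0 ≤ x)
    (h : HasGen a2 a3 n (i + 1) x) : HasGen a2 a3 n i x := by
  obtain ⟨c1, c2, heq, hle⟩ := h
  have hC2pos : 1 ≤ C2 := by
    by_contra hc
    push_neg at hc
    have : C2 * a2 ≤ 0 * a2 := by
      apply mul_le_mul_of_nonneg_right (by omega) (by omega)
    simp at this
    omega
  obtain ⟨d1, d2, heq', hd1, hw⟩ := aux_reduce a2 ha2 _ c1 c2 heq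
  have hbig : C2 * a2 + C1 ≤ (d2 : ℤ) * a2 + (d1 : ℤ) := by
    have h1 : a3 ≤ x + ((i : ℤ) + 1) * a3 := by nlinarith [Int.natCast_nonneg i]
    have : x + (((i + 1 : ℕ)) : ℤ) * a3 = (d2 : ℤ) * a2 + (d1 : ℤ) := heq'
    push_cast at this
    omega
  by_cases hcase : C1 ≤ (d1 : ℤ)
  · -- d1 ≥ C1, show d2 ≥ C2
    have hd2 : C2 ≤ (d2 : ℤ) := by
      by_contra hc
      push_neg at hc
      have : ((d2 : ℤ) + 1) * a2 ≤ C2 * a2 := by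
        apply mul_le_mul_of_nonneg_right (by omega) (by omega)
      nlinarith
    refine ⟨d1 - C1.toNat, d2 - C2.toNat, ?_, ?_⟩
    · have e1 : ((d1 - C1.toNat : ℕ) : ℤ) = (d1 : ℤ) - C1 := by omega
      have e2 : ((d2 - C2.toNat : ℕ) : ℤ) = (d2 : ℤ) - C2 := by omega
      rw [e1, e2]
      have : x + (((i + 1 : ℕ)) : ℤ) * a3 = (d2 : ℤ) * a2 + (d1 : ℤ) := heq'
      push_cast at this ⊢
      nlinarith
    · omega
  · -- d1 < C1, hence C1 > 0, so a2 ≤ C1 + C2 by hyp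
    push_neg at hcase
    have hyp' : a2 - C2 ≤ C1 := by
      rcases hyp with h0 | h0
      · omega
      · exact h0
    have hd2 : C2 + 1 ≤ (d2 : ℤ) := by
      by_contra hc
      push_neg at hc
      have : (d2 : ℤ) * a2 ≤ C2 * a2 := by
        apply mul_le_mul_of_nonneg_right (by omega) (by omega)
      omega
    refine ⟨d1 + (a2 - C1).toNat, d2 - (C2 + 1).toNat, ?_, ?_⟩
    · have e1 : ((d1 + (a2 - C1).toNat : ℕ) : ℤ) = (d1 : ℤ) + a2 - C1 := by
        push_cast; omega
      have e2 : ((d2 - (C2 + 1).toNat : ℕ) : ℤ) = (d2 : ℤ) - C2 - 1 := by omega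
      rw [e1, e2]
      have : x + (((i + 1 : ℕ)) : ℤ) * a3 = (d2 : ℤ) * a2 + (d1 : ℤ) := heq'
      push_cast at this ⊢
      nlinarith
    · omega

/-- Iterated descent to order 0. -/
lemma aux_descent0 (a2 a3 C2 C1 : ℤ) (ha2 : 1 < a2) (ha3 : a2 < a3)
    (hC : a3 = C2 * a2 + C1) (hC1 : 0 ≤ C1) (hC1' : C1 < a2)
    (hyp : C1 = 0 ∨ a2 - C2 ≤ C1) (n : ℕ) (x : ℤ) (hx : 0 ≤ x) :
    ∀ i : ℕ, HasGen a2 a3 n i x → HasGen a2 a3 n 0 x := by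
  intro i
  induction i with
  | zero => exact id
  | succ k ih =>
    intro h
    exact ih (aux_descent a2 a3 C2 C1 ha2 ha3 hC hC1 hC1' hyp n k x hx h)

/-- Lemma 15: if `a2 - C2 ≤ C1 < a2` or `C1 = 0`, then the fundamental stride generator for
`A` is of order 0. -/
theorem stmt18 (a2 a3 : ℤ) (ha2 : 1 < a2) (ha3 : a2 < a3)
    (C2 C1 : ℤ) (hC : a3 = C2 * a2 + C1) (hC1 : 0 ≤ C1) (hC1' : C1 < a2)
    (n p : ℕ) (hf : IsFundamentalSG a2 a3 n p)
    (hyp : C1 = 0 ∨ a2 - C2 ≤ C1) :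
    p = 0 := by
  by_contra hp
  obtain ⟨⟨hA, ⟨x, hx0, hxa, hB⟩, _⟩, _⟩ := hf
  obtain ⟨i, _, hgen⟩ := hA x hx0 hxa
  exact hB 0 (by omega)
    (aux_descent0 a2 a3 C2 C1 ha2 ha3 hC hC1 hC1' hyp n x hx0 i hgen)
end

section
/- Write a_3 = C_2*a_2 + C_1 with 0 ≤ C_1 < a_2. If SG(A, n, p) is a fundamental stride generator and a_2 − 2*C_2 + 1 ≤ 2*C_1 ≤ a_2, then p ≤ 1 (the fundamental stride generator is of order 0 or 1). -/
/-- Characterization: `x` has an `n`-generation of order `i` iff the canonical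
div/mod decomposition works. -/
lemma hasGen_iff (a2 a3 : ℤ) (ha2 : 1 < a2) (n i : ℕ) (x : ℤ)
    (hv : 0 ≤ x + (i : ℤ) * a3) :
    HasGen a2 a3 n i x ↔
      (x + (i : ℤ) * a3) / a2 + (x + (i : ℤ) * a3) % a2 ≤ (n : ℤ) + (i : ℤ) := by
  have h0 : (0:ℤ) < a2 := by linarith
  set v := x + (i : ℤ) * a3 with hvdef
  have hqr : a2 * (v / a2) + v % a2 = v := Int.mul_ediv_add_emod v a2
  have hr0 : 0 ≤ v % a2 := Int.emod_nonneg v (by linarith)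
  have hr1 : v % a2 < a2 := Int.emod_lt_of_pos v h0
  constructor
  · rintro ⟨c1, c2, heq, hle⟩
    have hd : (c1 : ℤ) - v % a2 = (v / a2 - c2) * a2 := by linear_combination -heq - hqr
    have hd0 : 0 ≤ v / a2 - c2 := by
      by_contra hneg
      push_neg at hneg
      have h1 : v / a2 - c2 ≤ -1 := by linarith
      have h2 : (v / a2 - c2) * a2 ≤ (-1) * a2 := by
        exact mul_le_mul_of_nonneg_right h1 (le_of_lt h0)
      have hc1 : (0:ℤ) ≤ c1 := Int.natCast_nonneg c1
      linarith
    have key : v / a2 + v % a2 ≤ (c1 : ℤ) + c2 := by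
      nlinarith [mul_nonneg hd0 (by linarith : (0:ℤ) ≤ a2 - 1), hd]
    have hle' : (c1 : ℤ) + (c2 : ℤ) ≤ (n : ℤ) + (i : ℤ) := by exact_mod_cast hle
    linarith
  · intro h
    have hq0 : 0 ≤ v / a2 := Int.ediv_nonneg hv (le_of_lt h0)
    refine ⟨(v % a2).toNat, (v / a2).toNat, ?_, ?_⟩
    · push_cast [Int.toNat_of_nonneg hq0, Int.toNat_of_nonneg hr0]
      linear_combination -hqr
    · have h1 : ((v % a2).toNat : ℤ) = v % a2 := Int.toNat_of_nonneg hr0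
      have h2 : ((v / a2).toNat : ℤ) = v / a2 := Int.toNat_of_nonneg hq0
      zify
      rw [h1, h2]
      linarith

/-- Mod step lemma. -/
lemma emod_add_a3 (a2 C2 C1 v : ℤ) :
    (v + (C2 * a2 + C1)) % a2 = (v % a2 + C1) % a2 := by
  have h1 : (v + (C2 * a2 + C1)) % a2 = (v + C1) % a2 := by
    have := Int.add_mul_emod_self_left (a := v + C1) (b := a2) (c := C2)
    rw [← this]; ring_nf
  rw [h1, ← Int.emod_add_emod]

/-- Lemma 16: if `a2 - 2*C2 + 1 ≤ 2*C1 ≤ a2`, then the fundamental stride generator for `A`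
is of order 0 or 1. -/
theorem stmt19 (a2 a3 : ℤ) (ha2 : 1 < a2) (ha3 : a2 < a3)
    (C2 C1 : ℤ) (hC : a3 = C2 * a2 + C1) (hC1 : 0 ≤ C1) (hC1' : C1 < a2)
    (n p : ℕ) (hf : IsFundamentalSG a2 a3 n p)
    (hlo : a2 - 2 * C2 + 1 ≤ 2 * C1) (hhi : 2 * C1 ≤ a2) :
    p ≤ 1 := by
  by_contra hp
  push_neg at hp
  obtain ⟨k, hk⟩ : ∃ k : ℕ, p = k + 2 := ⟨p - 2, by omega⟩
  obtain ⟨⟨hA, ⟨x0, hx0, hx0', hB⟩, _⟩, _⟩ := hf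
  have h0 : (0:ℤ) < a2 := by linarith
  have ha3pos : (0:ℤ) < a3 := by linarith
  -- nonnegativity of the shifted values
  have hvnn : ∀ i : ℕ, 0 ≤ x0 + (i : ℤ) * a3 := by
    intro i
    have : (0:ℤ) ≤ (i : ℤ) * a3 := mul_nonneg (Int.natCast_nonneg i) (le_of_lt ha3pos)
    linarith
  -- x0 has an n-generation of order exactly p
  obtain ⟨j, hj, hgenj⟩ := hA x0 hx0 hx0'
  have hjp : j = p := by
    by_contra hne
    exact hB j (by omega) hgenj
  have hgenp : HasGen a2 a3 n (k + 2) x0 := by rwa [hjp, hk] at hgenj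
  -- translate to F-values
  set v : ℤ := x0 + (k : ℤ) * a3 with hvdef
  have hv1 : x0 + ((k + 1 : ℕ) : ℤ) * a3 = v + a3 := by push_cast; ring
  have hv2 : x0 + ((k + 2 : ℕ) : ℤ) * a3 = v + a3 + a3 := by push_cast; ring
  have hF0 : ¬ (v / a2 + v % a2 ≤ (n : ℤ) + (k : ℤ)) := by
    intro h
    exact hB k (by omega) ((hasGen_iff a2 a3 ha2 n k x0 (hvnn k)).mpr h)
  have hF1 : ¬ ((v + a3) / a2 + (v + a3) % a2 ≤ (n : ℤ) + ((k:ℤ) + 1)) := by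
    intro h
    refine hB (k + 1) (by omega) ((hasGen_iff a2 a3 ha2 n (k+1) x0 (hvnn (k+1))).mpr ?_)
    rw [hv1]; push_cast; push_cast at h; linarith
  have hF2 : (v + a3 + a3) / a2 + (v + a3 + a3) % a2 ≤ (n : ℤ) + ((k:ℤ) + 2) := by
    have h := (hasGen_iff a2 a3 ha2 n (k+2) x0 (hvnn (k+2))).mp hgenp
    rw [hv2] at h; push_cast at h ⊢; linarith
  push_neg at hF0 hF1
  -- basic mod facts
  have mf : ∀ w : ℤ, 0 ≤ w % a2 ∧ w % a2 < a2 := fun w =>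
    ⟨Int.emod_nonneg w (by linarith), Int.emod_lt_of_pos w h0⟩
  -- step computation: given whether we wrap, compute div and mod of w + a3
  have step : ∀ w : ℤ,
      (w % a2 + C1 < a2 →
        (w + a3) % a2 = w % a2 + C1 ∧ (w + a3) / a2 = w / a2 + C2) ∧
      (a2 ≤ w % a2 + C1 →
        (w + a3) % a2 = w % a2 + C1 - a2 ∧ (w + a3) / a2 = w / a2 + C2 + 1) := by
    intro w
    have hm : (w + a3) % a2 = (w % a2 + C1) % a2 := by rw [hC]; exact emod_add_a3 a2 C2 C1 w
    have hqr : a2 * (w / a2) + w % a2 = w := Int.mul_ediv_add_emod w a2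
    have hqr' : a2 * ((w + a3) / a2) + (w + a3) % a2 = w + a3 := Int.mul_ediv_add_emod (w + a3) a2
    obtain ⟨hw0, hw1⟩ := mf w
    have hne : a2 ≠ 0 := by linarith
    constructor
    · intro hcase
      have hm' : (w + a3) % a2 = w % a2 + C1 := by
        rw [hm]; exact Int.emod_eq_of_lt (by linarith) hcase
      refine ⟨hm', ?_⟩
      have hEq : a2 * ((w + a3) / a2) = a2 * (w / a2 + C2) := by
        linear_combination hqr' - hm' - hqr + hC
      exact mul_left_cancel₀ hne hEq
    · intro hcase
      have hm' : (w + a3) % a2 = w % a2 + C1 - a2 := by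
        rw [hm]
        have hsub : (w % a2 + C1 - a2) % a2 = (w % a2 + C1) % a2 := by
          have := Int.add_mul_emod_self_left (a := w % a2 + C1) (b := a2) (c := -1)
          simpa using this
        rw [← hsub]
        exact Int.emod_eq_of_lt (by linarith) (by linarith)
      refine ⟨hm', ?_⟩
      have hEq : a2 * ((w + a3) / a2) = a2 * (w / a2 + C2 + 1) := by
        linear_combination hqr' - hm' - hqr + hC
      exact mul_left_cancel₀ hne hEq
  -- C1 + C2 ≥ 2
  have hsum : 2 ≤ C1 + C2 := by linarith
  obtain ⟨hv0, hv1'⟩ := mf v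
  obtain ⟨hw0, hw1⟩ := mf (v + a3)
  -- step from v+a3 to v+a3+a3 must wrap (F would otherwise increase)
  by_cases hwrap1 : (v + a3) % a2 + C1 < a2
  · obtain ⟨hm', hd'⟩ := (step (v + a3)).1 hwrap1
    linarith
  · push_neg at hwrap1
    obtain ⟨hm1, hd1⟩ := (step (v + a3)).2 hwrap1
    -- step from v to v+a3 cannot wrap (else next residue < C1, and 2C1 ≤ a2 blocks second wrap)
    by_cases hwrap0 : v % a2 + C1 < a2
    · obtain ⟨hm0, hd0⟩ := (step v).1 hwrap0
      -- F(v+2a3) = F(v) + 2(C1+C2) + 1 - a2 ≥ F(v) + 2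
      linarith
    · push_neg at hwrap0
      obtain ⟨hm0, hd0⟩ := (step v).2 hwrap0
      -- then (v+a3) % a2 = v % a2 + C1 - a2 < C1, so (v+a3)%a2 + C1 < 2C1 ≤ a2
      linarith
end
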